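/- Let q be a prime power, ℓ, m, n1 positive integers, and let M1 be a minimal linear finite transducer over F_q with structural parameters ℓ, m, n1. Let n2 ≥ n1 and let r = rank(Δ_{M1}). Then the number of linear finite transducers M ∈ L_{ℓ,m,n2} with M ∼ M1 is ∏_{i=0}^{r−1}(q^{n2} − q^i) · q^{(n2+ℓ)(n2−r)}. -/

import Mathlib

/-- Extension of the state transition function of a finite transducer to finite words. -/
def deltaStar {X S : Type*} (δ : S → X → S) : S → List X → S
  | s, [] => s
  | s, a :: w => deltaStar δ (δ s a) w

/-- Extension of the output function of a finite transducer to finite words. -/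
def lambdaStar {X Y S : Type*} (δ : S → X → S) (lam : S → X → Y) : S → List X → List Y
  | _, [] => []
  | s, a :: w => lam s a :: lambdaStar δ lam (δ s a) w

/-- A linear finite transducer over `F` with structural parameters `ℓ, m, n`, identified
with its quadruple of structural matrices `(A, B, C, D)`; its input alphabet is `F^ℓ`,
its output alphabet is `F^m` and its state space is `F^n`. -/
structure LFT (F : Type) [Field F] (ℓ m n : ℕ) where
  A : Matrix (Fin n) (Fin n) F
  B : Matrix (Fin n) (Fin ℓ) F
  C : Matrix (Fin m) (Fin n) F
  D : Matrix (Fin m) (Fin ℓ) F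

namespace LFT

variable {F : Type} [Field F] {ℓ m n n₁ n₂ : ℕ}

/-- The state transition function `δ(s, x) = As + Bx` of a linear finite transducer. -/
def del (M : LFT F ℓ m n) (s : Fin n → F) (x : Fin ℓ → F) : Fin n → F :=
  M.A.mulVec s + M.B.mulVec x

/-- The output function `λ(s, x) = Cs + Dx` of a linear finite transducer. -/
def out (M : LFT F ℓ m n) (s : Fin n → F) (x : Fin ℓ → F) : Fin m → F :=
  M.C.mulVec s + M.D.mulVec x

/-- Two states are equivalent when the transducers produce the same output word from them
on every finite input word. -/
def StateEquiv (M₁ : LFT F ℓ m n₁) (M₂ : LFT F ℓ m n₂)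
    (s₁ : Fin n₁ → F) (s₂ : Fin n₂ → F) : Prop :=
  ∀ α : List (Fin ℓ → F), lambdaStar M₁.del M₁.out s₁ α = lambdaStar M₂.del M₂.out s₂ α

/-- Two linear finite transducers are equivalent if every state of each one is equivalent
to some state of the other. -/
def Equiv (M₁ : LFT F ℓ m n₁) (M₂ : LFT F ℓ m n₂) : Prop :=
  (∀ s₁, ∃ s₂, StateEquiv M₁ M₂ s₁ s₂) ∧ (∀ s₂, ∃ s₁, StateEquiv M₁ M₂ s₁ s₂)

/-- A linear finite transducer is minimal if it has no pair of distinct equivalent states. -/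
def Minimal (M : LFT F ℓ m n) : Prop :=
  ∀ s s' : Fin n → F, StateEquiv M M s s' → s = s'

/-- The diagnostic matrix `Δ_M = [C; CA; …; CA^{n−1}]` of a linear finite transducer,
with the `mn` rows indexed by `Fin (n * m)` (row `i` is row `i % m` of `C * A ^ (i / m)`). -/
def diagMat (M : LFT F ℓ m n) : Matrix (Fin (n * m)) (Fin n) F :=
  Matrix.of fun i j =>
    (M.C * M.A ^ ((i : ℕ) / m))
      ⟨(i : ℕ) % m, Nat.mod_lt _ (Nat.pos_of_ne_zero fun h => by
        have hpos : 0 < n * m := Nat.lt_of_le_of_lt (Nat.zero_le _) i.isLt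
        rw [h, Nat.mul_zero] at hpos
        exact absurd hpos (lt_irrefl 0))⟩ j

end LFT

/-- A family of `k` vectors in `F^N` is in reduced row echelon form if there are strictly
increasing pivot positions where each vector has a leading `1` (with zeros in that
coordinate for the other vectors) and zeros before its pivot. -/
def IsRREF {F : Type} [Field F] {k N : ℕ} (b : Fin k → Fin N → F) : Prop :=
  ∃ p : Fin k → Fin N, StrictMono p ∧
    (∀ i i' : Fin k, b i' (p i) = if i' = i then 1 else 0) ∧
    ∀ (i : Fin k) (c : Fin N), (c : ℕ) < (p i : ℕ) → b i c = 0

/-- A linear finite transducer of size `n` is canonical if the columns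
`Δ_M e₁, …, Δ_M eₙ` of its diagnostic matrix form the standard basis (the reduced row
echelon form basis) of the column space `{Δ_M s ∣ s}` of `Δ_M`: they are linearly
independent (hence a basis of the column space, which they always span) and in RREF. -/
def LFT.IsCanonical {F : Type} [Field F] {ℓ m n : ℕ} (M : LFT F ℓ m n) : Prop :=
  LinearIndependent F (fun j : Fin n => fun r : Fin (n * m) => M.diagMat r j) ∧
    IsRREF (fun j : Fin n => fun r : Fin (n * m) => M.diagMat r j)

section Aux

open Function Matrix

variable {F : Type} [Field F] {ℓ m n n' n₁ n₂ : ℕ}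

namespace LFT

lemma stateEquiv_out {M : LFT F ℓ m n} {M' : LFT F ℓ m n'} {s s'}
    (h : StateEquiv M M' s s') (x : Fin ℓ → F) : M.out s x = M'.out s' x := by
  have := h [x]
  simp only [lambdaStar, List.cons.injEq, and_true] at this
  exact this

lemma stateEquiv_del {M : LFT F ℓ m n} {M' : LFT F ℓ m n'} {s s'}
    (h : StateEquiv M M' s s') (x : Fin ℓ → F) :
    StateEquiv M M' (M.del s x) (M'.del s' x) := by
  intro α
  have := h (x :: α)
  simp only [lambdaStar, List.cons.injEq] at this
  exact this.2

lemma stateEquiv_of {M : LFT F ℓ m n} {M' : LFT F ℓ m n'} {s s'}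
    (h1 : ∀ x, M.out s x = M'.out s' x)
    (h2 : ∀ x, StateEquiv M M' (M.del s x) (M'.del s' x)) :
    StateEquiv M M' s s' := by
  intro α
  cases α with
  | nil => rfl
  | cons x α => simp [lambdaStar, h1 x, h2 x α]

/-- observational equality of states -/
def ObsEq (M : LFT F ℓ m n) (M' : LFT F ℓ m n') (s : Fin n → F) (s' : Fin n' → F) : Prop :=
  ∀ k : ℕ, (M.C * M.A ^ k).mulVec s = (M'.C * M'.A ^ k).mulVec s'

lemma stateEquiv_obs {M : LFT F ℓ m n} {M' : LFT F ℓ m n'} {s s'}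
    (h : StateEquiv M M' s s') : ObsEq M M' s s' := by
  intro k
  induction k generalizing s s' with
  | zero =>
    have := stateEquiv_out h 0
    simpa [out, Matrix.mulVec_zero] using this
  | succ k ih =>
    have hd := stateEquiv_del h 0
    have : M.del s 0 = M.A.mulVec s := by simp [del, Matrix.mulVec_zero]
    rw [this] at hd
    have : M'.del s' 0 = M'.A.mulVec s' := by simp [del, Matrix.mulVec_zero]
    rw [this] at hd
    have := ih hd
    rw [pow_succ, ← Matrix.mul_assoc, pow_succ, ← Matrix.mul_assoc]
    simpa [Matrix.mulVec_mulVec] using this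

lemma matrix_ext_mulVec {a b : ℕ} {M N : Matrix (Fin a) (Fin b) F}
    (h : ∀ v, M.mulVec v = N.mulVec v) : M = N :=
  Matrix.toLin'.injective (LinearMap.ext fun v => by
    simp only [Matrix.toLin'_apply, h v])

lemma stateEquiv_D {M : LFT F ℓ m n} {M' : LFT F ℓ m n'} {s s'}
    (h : StateEquiv M M' s s') : M.D = M'.D := by
  apply matrix_ext_mulVec; intro x
  have h0 := stateEquiv_obs h 0
  simp only [pow_zero, Matrix.mul_one] at h0
  have h1 := stateEquiv_out h x
  unfold out at h1
  rw [h0] at h1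
  exact add_left_cancel h1

lemma stateEquiv_markov {M : LFT F ℓ m n} {M' : LFT F ℓ m n'} {s s'}
    (h : StateEquiv M M' s s') (k : ℕ) :
    M.C * M.A ^ k * M.B = M'.C * M'.A ^ k * M'.B := by
  apply matrix_ext_mulVec; intro x
  have hx := stateEquiv_obs (stateEquiv_del h x) k
  have h0 := stateEquiv_obs (stateEquiv_del h 0) k
  unfold del at hx h0
  simp only [Matrix.mulVec_zero, add_zero] at h0
  simp only [Matrix.mulVec_add] at hx
  rw [h0] at hx
  have h2 := add_left_cancel hx
  simpa [Matrix.mulVec_mulVec] using h2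

lemma stateEquiv_of_obs {M : LFT F ℓ m n} {M' : LFT F ℓ m n'}
    (hD : M.D = M'.D) (hM : ∀ k, M.C * M.A ^ k * M.B = M'.C * M'.A ^ k * M'.B)
    {s s'} (hobs : ObsEq M M' s s') : StateEquiv M M' s s' := by
  intro α
  induction α generalizing s s' with
  | nil => rfl
  | cons x α ih =>
    simp only [lambdaStar, List.cons.injEq]
    constructor
    · have h0 := hobs 0
      simp only [pow_zero, Matrix.mul_one] at h0
      unfold out
      rw [h0, hD]
    · apply ih
      intro k
      unfold del
      simp only [Matrix.mulVec_add, Matrix.mulVec_mulVec]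
      have h1 := hobs (k + 1)
      have e : ∀ {p : ℕ} (N : LFT F ℓ m p), N.C * N.A ^ (k+1) = N.C * N.A ^ k * N.A :=
        fun N => by rw [Matrix.mul_assoc, ← pow_succ]
      rw [e M, e M'] at h1
      rw [h1, hM k]

lemma sum_mulVec' {ι : Type*} {a b : ℕ} (t : Finset ι) (f : ι → Matrix (Fin a) (Fin b) F)
    (v : Fin b → F) : (∑ i ∈ t, f i).mulVec v = ∑ i ∈ t, (f i).mulVec v := by
  classical
  induction t using Finset.induction_on with
  | empty => simp
  | insert _ _ h ih => rw [Finset.sum_insert h, Finset.sum_insert h, Matrix.add_mulVec, ih]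

lemma obs_all_zero {nn : ℕ} (A : Matrix (Fin nn) (Fin nn) F) (C : Matrix (Fin m) (Fin nn) F)
    (s : Fin nn → F) (h : ∀ k < nn, (C * A ^ k).mulVec s = 0) :
    ∀ k, (C * A ^ k).mulVec s = 0 := by
  intro k
  induction k using Nat.strong_induction_on with
  | _ k ih =>
    rcases lt_or_ge k nn with hk | hk
    · exact h k hk
    · have hmono := Matrix.charpoly_monic A
      have hdeg : A.charpoly.natDegree = nn := by simpa using Matrix.charpoly_natDegree_eq_dim A
      have h0 := Matrix.aeval_self_charpoly A
      rw [Polynomial.aeval_eq_sum_range, hdeg, Finset.sum_range_succ] at h0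
      have hcoeff : A.charpoly.coeff nn = 1 := by
        have := hmono.coeff_natDegree
        rwa [hdeg] at this
      rw [hcoeff, one_smul] at h0
      have hch : A ^ nn = -∑ i ∈ Finset.range nn, A.charpoly.coeff i • A ^ i :=
        eq_neg_of_add_eq_zero_right h0
      have hvs : (A ^ nn).mulVec s
          = -∑ i ∈ Finset.range nn, A.charpoly.coeff i • (A ^ i).mulVec s := by
        rw [hch, Matrix.neg_mulVec, sum_mulVec']
        congr 1
        exact Finset.sum_congr rfl fun i _ => Matrix.smul_mulVec _ _ _
      have e1 : (C * A ^ k).mulVec s = (C * A ^ (k - nn)).mulVec ((A ^ nn).mulVec s) := by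
        rw [Matrix.mulVec_mulVec, Matrix.mul_assoc, ← pow_add, Nat.sub_add_cancel hk]
      rw [e1, hvs, ← Matrix.mulVecLin_apply, map_neg, map_sum]
      simp only [_root_.map_smul, Matrix.mulVecLin_apply, Matrix.mulVec_mulVec]
      rw [neg_eq_zero]
      refine Finset.sum_eq_zero fun i hi => ?_
      rw [Finset.mem_range] at hi
      have e2 : C * A ^ (k - nn) * A ^ i = C * A ^ (k - nn + i) := by
        rw [Matrix.mul_assoc, ← pow_add]
      rw [e2, ih _ (by omega), smul_zero]

lemma minimal_obs_inj {M₁ : LFT F ℓ m n₁} (hmin : M₁.Minimal) {s : Fin n₁ → F}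
    (h : ∀ k < n₁, (M₁.C * M₁.A ^ k).mulVec s = 0) : s = 0 := by
  have hall := obs_all_zero M₁.A M₁.C s h
  have heq : StateEquiv M₁ M₁ s 0 :=
    stateEquiv_of_obs rfl (fun _ => rfl)
      (fun k => by rw [hall k, Matrix.mulVec_zero])
  exact hmin s 0 heq

lemma diagMat_mulVec_eq {M₁ : LFT F ℓ m n₁} (hm : 0 < m) (s : Fin n₁ → F)
    {k : ℕ} (hk : k < n₁) (j : Fin m) (hb : (j : ℕ) + m * k < n₁ * m) :
    M₁.diagMat.mulVec s ⟨(j : ℕ) + m * k, hb⟩ = (M₁.C * M₁.A ^ k).mulVec s j := by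
  have hdiv : ((j : ℕ) + m * k) / m = k := by
    rw [Nat.add_mul_div_left _ _ hm, Nat.div_eq_of_lt j.2, zero_add]
  have hmod : ((j : ℕ) + m * k) % m = (j : ℕ) := by
    rw [Nat.add_mul_mod_self_left, Nat.mod_eq_of_lt j.2]
  show (∑ x, M₁.diagMat ⟨(j : ℕ) + m * k, hb⟩ x * s x) = ∑ x, (M₁.C * M₁.A ^ k) j x * s x
  refine Finset.sum_congr rfl fun x _ => ?_
  congr 1
  show (M₁.C * M₁.A ^ (((j : ℕ) + m * k) / m)) ⟨((j : ℕ) + m * k) % m, _⟩ x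
      = (M₁.C * M₁.A ^ k) j x
  simp only [hdiv, hmod]

lemma diagMat_rank {M₁ : LFT F ℓ m n₁} (hm : 0 < m) (hmin : M₁.Minimal) :
    M₁.diagMat.rank = n₁ := by
  have hinj : Function.Injective M₁.diagMat.mulVecLin := by
    rw [← LinearMap.ker_eq_bot]
    rw [Submodule.eq_bot_iff]
    intro s hs
    rw [LinearMap.mem_ker, Matrix.mulVecLin_apply] at hs
    refine minimal_obs_inj hmin fun k hk => ?_
    funext j
    have hb : (j : ℕ) + m * k < n₁ * m := by
      have h2 : m * (k + 1) = m * k + m := by ring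
      have h3 : m * (k + 1) ≤ m * n₁ := Nat.mul_le_mul_left m hk
      have h4 : m * n₁ = n₁ * m := by ring
      have := j.2
      omega
    rw [← diagMat_mulVec_eq hm s hk j hb, hs]
    rfl
  rw [Matrix.rank, LinearMap.finrank_range_of_inj hinj]
  simp [Module.finrank_fin_fun]

/-- `T` conjugates `M` onto `M₁`. -/
def GoodT (M₁ : LFT F ℓ m n₁) (M : LFT F ℓ m n₂) (T : Matrix (Fin n₁) (Fin n₂) F) : Prop :=
  T * M.A = M₁.A * T ∧ T * M.B = M₁.B ∧ M.C = M₁.C * T ∧ M.D = M₁.D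

lemma goodT_pow {M₁ : LFT F ℓ m n₁} {M : LFT F ℓ m n₂} {T : Matrix (Fin n₁) (Fin n₂) F}
    (h : T * M.A = M₁.A * T) (k : ℕ) : T * M.A ^ k = M₁.A ^ k * T := by
  induction k with
  | zero => rw [pow_zero, pow_zero, Matrix.one_mul, Matrix.mul_one]
  | succ k ih =>
    calc T * M.A ^ (k+1) = T * M.A ^ k * M.A := by rw [pow_succ, Matrix.mul_assoc]
      _ = M₁.A ^ k * T * M.A := by rw [ih]
      _ = M₁.A ^ k * (M₁.A * T) := by rw [Matrix.mul_assoc, h]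
      _ = M₁.A ^ (k+1) * T := by rw [← Matrix.mul_assoc, ← pow_succ]

lemma obs_mat_of_goodT {M₁ : LFT F ℓ m n₁} {M : LFT F ℓ m n₂} {T : Matrix (Fin n₁) (Fin n₂) F}
    (hG : GoodT M₁ M T) (k : ℕ) : M.C * M.A ^ k = M₁.C * M₁.A ^ k * T := by
  rw [hG.2.2.1, Matrix.mul_assoc, goodT_pow hG.1 k, ← Matrix.mul_assoc]

lemma stateEquiv_of_goodT {M₁ : LFT F ℓ m n₁} {M : LFT F ℓ m n₂} {T : Matrix (Fin n₁) (Fin n₂) F}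
    (hG : GoodT M₁ M T) (s : Fin n₂ → F) : StateEquiv M M₁ s (T.mulVec s) := by
  refine stateEquiv_of_obs hG.2.2.2 (fun k => ?_) (fun k => ?_)
  · rw [obs_mat_of_goodT hG k, Matrix.mul_assoc, hG.2.1]
  · rw [obs_mat_of_goodT hG k, ← Matrix.mulVec_mulVec]

lemma equiv_of_goodT {M₁ : LFT F ℓ m n₁} {M : LFT F ℓ m n₂} {T : Matrix (Fin n₁) (Fin n₂) F}
    (hG : GoodT M₁ M T) (hsurj : Function.Surjective T.mulVec) : Equiv M M₁ := by
  refine ⟨fun s => ⟨T.mulVec s, stateEquiv_of_goodT hG s⟩, fun s₁ => ?_⟩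
  obtain ⟨s, hs⟩ := hsurj s₁
  exact ⟨s, hs ▸ stateEquiv_of_goodT hG s⟩

lemma partner_unique {M₁ : LFT F ℓ m n₁} (hmin : M₁.Minimal) {M : LFT F ℓ m n₂}
    {s : Fin n₂ → F} {s₁ s₁' : Fin n₁ → F}
    (h : StateEquiv M M₁ s s₁) (h' : StateEquiv M M₁ s s₁') : s₁ = s₁' := by
  have hobs := stateEquiv_obs h
  have hobs' := stateEquiv_obs h'
  have hz : ∀ k < n₁, (M₁.C * M₁.A ^ k).mulVec (s₁ - s₁') = 0 := by
    intro k _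
    rw [Matrix.mulVec_sub, ← hobs k, ← hobs' k, sub_self]
  have := minimal_obs_inj hmin hz
  exact sub_eq_zero.mp this

lemma goodT_unique {M₁ : LFT F ℓ m n₁} (hmin : M₁.Minimal) {M : LFT F ℓ m n₂}
    {T T' : Matrix (Fin n₁) (Fin n₂) F}
    (h : GoodT M₁ M T) (h' : GoodT M₁ M T') : T = T' :=
  matrix_ext_mulVec fun v =>
    partner_unique hmin (stateEquiv_of_goodT h v) (stateEquiv_of_goodT h' v)

lemma equiv_iff_goodT {M₁ : LFT F ℓ m n₁} (hmin : M₁.Minimal) (M : LFT F ℓ m n₂) :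
    Equiv M M₁ ↔ ∃ T, Function.Surjective T.mulVec ∧ GoodT M₁ M T := by
  constructor
  · intro hE
    obtain ⟨z₁, hz₁⟩ := hE.1 0
    have hD : M.D = M₁.D := stateEquiv_D hz₁
    have hMar := fun k => stateEquiv_markov hz₁ k
    have hf : ∀ s, StateEquiv M M₁ s (Classical.choose (hE.1 s)) :=
      fun s => Classical.choose_spec (hE.1 s)
    set f : (Fin n₂ → F) → (Fin n₁ → F) := fun s => Classical.choose (hE.1 s) with hfdef
    have hpart : ∀ (s : Fin n₂ → F) (s₁ : Fin n₁ → F),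
        StateEquiv M M₁ s s₁ → f s = s₁ :=
      fun s s₁ h => partner_unique hmin (hf s) h
    have hadd : ∀ s t, f (s + t) = f s + f t := by
      intro s t
      refine hpart _ _ (stateEquiv_of_obs hD hMar fun k => ?_)
      rw [Matrix.mulVec_add, Matrix.mulVec_add, stateEquiv_obs (hf s) k,
        stateEquiv_obs (hf t) k]
    have hsmul : ∀ (c : F) s, f (c • s) = c • f s := by
      intro c s
      refine hpart _ _ (stateEquiv_of_obs hD hMar fun k => ?_)
      rw [Matrix.mulVec_smul, Matrix.mulVec_smul, stateEquiv_obs (hf s) k]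
    let flin : (Fin n₂ → F) →ₗ[F] (Fin n₁ → F) :=
      { toFun := f, map_add' := hadd, map_smul' := hsmul }
    set T := LinearMap.toMatrix' flin with hTdef
    have hT : ∀ s, T.mulVec s = f s := by
      intro s
      have h1 : Matrix.toLin' T = flin := Matrix.toLin'_toMatrix' flin
      calc T.mulVec s = Matrix.toLin' T s := (Matrix.toLin'_apply _ _).symm
        _ = flin s := by rw [h1]
    refine ⟨T, ?_, ?_, ?_, ?_, hD⟩
    · intro s₁
      obtain ⟨s, hs⟩ := hE.2 s₁
      exact ⟨s, by rw [hT s]; exact hpart s s₁ hs⟩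
    · -- T * M.A = M₁.A * T
      apply matrix_ext_mulVec
      intro v
      rw [← Matrix.mulVec_mulVec, ← Matrix.mulVec_mulVec, hT, hT]
      have h1 : StateEquiv M M₁ (M.A.mulVec v) (M₁.A.mulVec (f v)) := by
        have := stateEquiv_del (hf v) 0
        simpa [del, Matrix.mulVec_zero] using this
      exact hpart _ _ h1
    · -- T * M.B = M₁.B
      apply matrix_ext_mulVec
      intro x
      rw [← Matrix.mulVec_mulVec, hT]
      have h1 : StateEquiv M M₁ (M.B.mulVec x) (M₁.B.mulVec x) :=
        stateEquiv_of_obs hD hMar fun k => by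
          rw [Matrix.mulVec_mulVec, Matrix.mulVec_mulVec, hMar k]
      exact hpart _ _ h1
    · -- M.C = M₁.C * T
      apply matrix_ext_mulVec
      intro v
      rw [← Matrix.mulVec_mulVec, hT]
      have h1 := stateEquiv_obs (hf v) 0
      simpa [pow_zero, Matrix.mul_one] using h1
  · rintro ⟨T, hsurj, hG⟩
    exact equiv_of_goodT hG hsurj

lemma card_solset {a b c : ℕ} (T : Matrix (Fin a) (Fin b) F) [Fintype F]
    (hsurj : Function.Surjective T.mulVec) (R : Matrix (Fin a) (Fin c) F) :
    Nat.card {X : Matrix (Fin b) (Fin c) F // T * X = R}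
      = Fintype.card F ^ (b * c - a * c) := by
  classical
  obtain ⟨U, hU⟩ := Matrix.mulVec_surjective_iff_exists_right_inverse.mp hsurj
  let ψ : Matrix (Fin b) (Fin c) F →ₗ[F] Matrix (Fin a) (Fin c) F :=
    { toFun := fun X => T * X
      map_add' := fun X Y => Matrix.mul_add T X Y
      map_smul' := fun r X => Matrix.mul_smul T r X }
  have hψs : Function.Surjective ψ := fun Y =>
    ⟨U * Y, by show T * (U * Y) = Y; rw [← Matrix.mul_assoc, hU, Matrix.one_mul]⟩
  have he : {X : Matrix (Fin b) (Fin c) F // T * X = R} ≃ LinearMap.ker ψ :=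
    { toFun := fun X => ⟨X.1 - U * R, by
        rw [LinearMap.mem_ker, map_sub]
        show T * X.1 - T * (U * R) = 0
        rw [X.2, ← Matrix.mul_assoc, hU, Matrix.one_mul, sub_self]⟩
      invFun := fun Y => ⟨Y.1 + U * R, by
        have hY : T * Y.1 = 0 := Y.2
        show T * (Y.1 + U * R) = R
        rw [Matrix.mul_add, hY, ← Matrix.mul_assoc, hU, Matrix.one_mul, zero_add]⟩
      left_inv := fun X => by apply Subtype.ext; simp
      right_inv := fun Y => by apply Subtype.ext; simp }
  rw [Nat.card_congr he]
  letI : Fintype (LinearMap.ker ψ) := Fintype.ofFinite _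
  have hfin : Module.finrank F (LinearMap.ker ψ) = b * c - a * c := by
    have h1 := LinearMap.finrank_range_add_finrank_ker ψ
    have h2 : LinearMap.range ψ = ⊤ := LinearMap.range_eq_top.mpr hψs
    rw [h2, finrank_top] at h1
    have h3 : Module.finrank F (Matrix (Fin a) (Fin c) F) = a * c := by
      simp [Module.finrank_matrix]
    have h4 : Module.finrank F (Matrix (Fin b) (Fin c) F) = b * c := by
      simp [Module.finrank_matrix]
    omega
  rw [Nat.card_eq_fintype_card, Module.card_eq_pow_finrank (K := F), hfin]

lemma card_surjMat [Fintype F] (hn₂ : n₁ ≤ n₂) :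
    Nat.card {T : Matrix (Fin n₁) (Fin n₂) F // Function.Surjective T.mulVec}
      = ∏ i ∈ Finset.range n₁, (Fintype.card F ^ n₂ - Fintype.card F ^ i) := by
  have hiff : ∀ T : Matrix (Fin n₁) (Fin n₂) F,
      Function.Surjective T.mulVec ↔ LinearIndependent F (fun i => T i) := by
    intro T
    constructor
    · intro h
      obtain ⟨U, hU⟩ := Matrix.mulVec_surjective_iff_exists_right_inverse.mp h
      rw [show (fun i => T i) = T.row from rfl, ← Matrix.vecMul_injective_iff]
      intro x y hxy
      have h2 := congrArg (fun w => Matrix.vecMul w U) hxy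
      simpa [Matrix.vecMul_vecMul, hU, Matrix.vecMul_one] using h2
    · intro h
      have hrank : T.rank = n₁ := by simpa using LinearIndependent.rank_matrix h
      have htop : LinearMap.range T.mulVecLin = ⊤ := by
        apply Submodule.eq_top_of_finrank_eq
        rw [show Module.finrank F (LinearMap.range T.mulVecLin) = T.rank from rfl, hrank]
        simp
      intro y
      have hy : y ∈ LinearMap.range T.mulVecLin := by rw [htop]; exact Submodule.mem_top
      obtain ⟨x, hx⟩ := hy
      exact ⟨x, hx⟩
  rw [Nat.card_congr (Equiv.subtypeEquivRight hiff)]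
  have hle : n₁ ≤ Module.finrank F (Fin n₂ → F) := by
    rw [Module.finrank_fin_fun]; exact hn₂
  have hcard := card_linearIndependent (K := F) (V := Fin n₂ → F) hle
  rw [Module.finrank_fin_fun] at hcard
  rw [← Fin.prod_univ_eq_prod_range (fun j => Fintype.card F ^ n₂ - Fintype.card F ^ j) n₁]
  exact hcard

lemma card_main {M₁ : LFT F ℓ m n₁} [Fintype F] (hmin : M₁.Minimal) (hn₂ : n₁ ≤ n₂) :
    Nat.card {M : LFT F ℓ m n₂ // Equiv M M₁} =
      (∏ i ∈ Finset.range n₁, (Fintype.card F ^ n₂ - Fintype.card F ^ i)) *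
        Fintype.card F ^ ((n₂ + ℓ) * (n₂ - n₁)) := by
  classical
  have hcard1 : Nat.card (Σ T : {T : Matrix (Fin n₁) (Fin n₂) F // Function.Surjective T.mulVec},
        ({A : Matrix (Fin n₂) (Fin n₂) F // T.1 * A = M₁.A * T.1} ×
          {B : Matrix (Fin n₂) (Fin ℓ) F // T.1 * B = M₁.B}))
      = Nat.card {M : LFT F ℓ m n₂ // Equiv M M₁} := by
    apply Nat.card_eq_of_bijective
      (f := fun p => ⟨⟨p.2.1.1, p.2.2.1, M₁.C * p.1.1, M₁.D⟩,
        equiv_of_goodT ⟨p.2.1.2, p.2.2.2, rfl, rfl⟩ p.1.2⟩)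
    constructor
    · rintro ⟨⟨T, hT⟩, ⟨A, hA⟩, ⟨B, hB⟩⟩ ⟨⟨T', hT'⟩, ⟨A', hA'⟩, ⟨B', hB'⟩⟩ h
      simp only [Subtype.mk.injEq, LFT.mk.injEq] at h
      obtain ⟨h1, h2, h3, -⟩ := h
      subst h1; subst h2
      have hTT : T = T' := goodT_unique hmin
        (M := ⟨A, B, M₁.C * T, M₁.D⟩) ⟨hA, hB, rfl, rfl⟩ ⟨hA', hB', h3, rfl⟩
      subst hTT
      rfl
    · rintro ⟨M, hM⟩
      obtain ⟨T, hsurj, hG⟩ := (equiv_iff_goodT hmin M).mp hM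
      refine ⟨⟨⟨T, hsurj⟩, ⟨M.A, hG.1⟩, ⟨M.B, hG.2.1⟩⟩, ?_⟩
      apply Subtype.ext
      show (⟨M.A, M.B, M₁.C * T, M₁.D⟩ : LFT F ℓ m n₂) = M
      rw [← hG.2.2.1, ← hG.2.2.2]
  rw [← hcard1]
  letI : Fintype {T : Matrix (Fin n₁) (Fin n₂) F // Function.Surjective T.mulVec} :=
    Fintype.ofFinite _
  letI : ∀ T : {T : Matrix (Fin n₁) (Fin n₂) F // Function.Surjective T.mulVec},
      Fintype ({A : Matrix (Fin n₂) (Fin n₂) F // T.1 * A = M₁.A * T.1} ×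
        {B : Matrix (Fin n₂) (Fin ℓ) F // T.1 * B = M₁.B}) := fun T => Fintype.ofFinite _
  rw [Nat.card_eq_fintype_card, Fintype.card_sigma]
  have hconst : ∀ T : {T : Matrix (Fin n₁) (Fin n₂) F // Function.Surjective T.mulVec},
      Fintype.card ({A : Matrix (Fin n₂) (Fin n₂) F // T.1 * A = M₁.A * T.1} ×
        {B : Matrix (Fin n₂) (Fin ℓ) F // T.1 * B = M₁.B})
      = Fintype.card F ^ (n₂ * n₂ - n₁ * n₂) * Fintype.card F ^ (n₂ * ℓ - n₁ * ℓ) := by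
    intro T
    rw [← Nat.card_eq_fintype_card, Nat.card_prod, card_solset T.1 T.2 (M₁.A * T.1),
      card_solset T.1 T.2 M₁.B]
  rw [Finset.sum_congr rfl (fun T _ => hconst T), Finset.sum_const, smul_eq_mul,
    Finset.card_univ, ← Nat.card_eq_fintype_card, card_surjMat hn₂]
  congr 1
  rw [← pow_add]
  congr 1
  obtain ⟨d, rfl⟩ : ∃ d, n₂ = n₁ + d := ⟨n₂ - n₁, by omega⟩
  have h1 : (n₁ + d) * (n₁ + d) - n₁ * (n₁ + d) = d * (n₁ + d) := by
    rw [Nat.add_mul]; omega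
  have h2 : (n₁ + d) * ℓ - n₁ * ℓ = d * ℓ := by
    rw [Nat.add_mul]; omega
  rw [h1, h2, Nat.add_sub_cancel_left]
  ring

end LFT

end Aux
/-- for a minimal LFT `M₁` over `F_q` (`q = |F|` a prime power) with
structural parameters `ℓ, m, n₁` and `n₂ ≥ n₁`, the number of LFTs of size `n₂`
equivalent to `M₁` is `∏_{i=0}^{r−1}(q^{n₂} − q^i) · q^{(n₂+ℓ)(n₂−r)}`, where
`r = rank Δ_{M₁}`. -/
theorem card_equiv_class_of_minimal {F : Type} [Field F] [Fintype F] {ℓ m n₁ : ℕ}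
    (hℓ : 0 < ℓ) (hm : 0 < m) (hn₁ : 0 < n₁)
    (M₁ : LFT F ℓ m n₁) (hmin : M₁.Minimal) (n₂ : ℕ) (hn₂ : n₁ ≤ n₂) :
    Nat.card {M : LFT F ℓ m n₂ // LFT.Equiv M M₁} =
      (∏ i ∈ Finset.range M₁.diagMat.rank,
          (Fintype.card F ^ n₂ - Fintype.card F ^ i)) *
        Fintype.card F ^ ((n₂ + ℓ) * (n₂ - M₁.diagMat.rank)) := by
  have hr := LFT.diagMat_rank (M₁ := M₁) hm hmin
  rw [hr]
  exact LFT.card_main hmin hn₂
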